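/- Let 1 ≤ p < ∞, let A ∈ ℝ^{n×m}, U ∈ ℝ^{n×k}, V ∈ ℝ^{k×m}, and set Δ = A − UV. Then for every tuple J = (j_1, …, j_k) ∈ {1,…,m}^k, |det(V_J)|^p · inf{ ‖A − A_{J'} Y‖_p^p : J' ∈ {1,…,m}^k, Y ∈ ℝ^{k×m} } ≤ Σ_{d=1}^n Σ_{i=1}^m |det(M(d,i,J))|^p, where M(d,i,J) is the (k+1)×(k+1) matrix whose first row is (Δ_{d i}, Δ_{d j_1}, …, Δ_{d j_k}) and whose remaining k rows are given by the columns V_i, V_{j_1}, …, V_{j_k} of V. -/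

import Mathlib

open Matrix

lemma det_cons_zero {k : ℕ} (b : ℝ) (w : Fin k → ℝ) (B : Matrix (Fin k) (Fin k) ℝ) :
    (Matrix.of (Fin.cons (Fin.cons b w) (fun t => Fin.cons 0 (B t))) :
      Matrix (Fin (k+1)) (Fin (k+1)) ℝ).det = b * B.det := by
  rw [Matrix.det_succ_column_zero, Fin.sum_univ_succ]
  have h0 : ∀ i : Fin k,
      (Matrix.of (Fin.cons (Fin.cons b w) (fun t => Fin.cons (0:ℝ) (B t))) :
        Matrix (Fin (k+1)) (Fin (k+1)) ℝ) i.succ 0 = 0 := by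
    intro i; simp
  simp only [h0, mul_zero, zero_mul, Finset.sum_const_zero, add_zero]
  have : ((Matrix.of (Fin.cons (Fin.cons b w) (fun t => Fin.cons (0:ℝ) (B t))) :
      Matrix (Fin (k+1)) (Fin (k+1)) ℝ).submatrix (Fin.succAbove 0) Fin.succ) = B := by
    ext t s
    simp [Fin.succAbove]
  rw [this]
  simp

lemma det_key {k : ℕ} (a : ℝ) (w u x : Fin k → ℝ) (B : Matrix (Fin k) (Fin k) ℝ)
    (h : ∀ t, u t = ∑ s, B t s * x s) :
    (Matrix.of (Fin.cons (Fin.cons a w) (fun t => Fin.cons (u t) (B t))) :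
      Matrix (Fin (k+1)) (Fin (k+1)) ℝ).det = (a - ∑ s, w s * x s) * B.det := by
  set M : Matrix (Fin (k+1)) (Fin (k+1)) ℝ :=
    Matrix.of (Fin.cons (Fin.cons a w) (fun t => Fin.cons (u t) (B t))) with hM
  set C : Matrix (Fin (k+1)) (Fin (k+1)) ℝ :=
    Matrix.of (fun r c => if c = 0 then (Fin.cons (1:ℝ) (fun s => -x s) : Fin (k+1) → ℝ) r else if r = c then 1 else 0)
    with hC
  have hCdet : C.det = 1 := by
    have ht : C.BlockTriangular (OrderDual.toDual) := by
      intro r c hrc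
      have hrc' : r < c := hrc
      have hc0 : c ≠ 0 := (lt_of_le_of_lt (Fin.zero_le r) hrc').ne'
      simp [hC, hc0, hrc'.ne]
    rw [Matrix.det_of_lowerTriangular C ht]
    have hd : ∀ r : Fin (k+1), C r r = 1 := by
      intro r
      rcases Fin.eq_zero_or_eq_succ r with h0 | ⟨t, rfl⟩
      · subst h0; simp [hC]
      · simp [hC, Fin.succ_ne_zero]
    simp [hd]
  have hMC : M * C = Matrix.of (Fin.cons (Fin.cons (a - ∑ s, w s * x s) w)
      (fun t => Fin.cons 0 (B t))) := by
    ext r c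
    rcases Fin.eq_zero_or_eq_succ c with hc | ⟨s, rfl⟩
    · subst hc
      rw [Matrix.mul_apply, Fin.sum_univ_succ]
      rcases Fin.eq_zero_or_eq_succ r with hr | ⟨t, rfl⟩
      · subst hr
        simp [hM, hC, h, Finset.mul_sum, mul_comm, sub_eq_add_neg, Finset.sum_neg_distrib,
          neg_mul, mul_neg]
      · simp [hM, hC, h t, mul_neg, Finset.sum_neg_distrib, mul_comm]
    · rw [Matrix.mul_apply, Fin.sum_univ_succ]
      have : ∀ c' : Fin (k+1), C c' s.succ = if c' = s.succ then 1 else 0 := by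
        intro c'; simp [hC, Fin.succ_ne_zero]
      simp only [this]
      rcases Fin.eq_zero_or_eq_succ r with hr | ⟨t, rfl⟩ <;>
        · first | subst hr | skip
          simp [hM, Fin.succ_ne_zero, Finset.mul_sum, mul_ite, Finset.sum_ite_eq',
            Fin.succ_inj, eq_comm]
  have := congrArg Matrix.det hMC
  rw [Matrix.det_mul, hCdet, mul_one] at this
  rw [this, det_cons_zero]

/-- Entry-wise ℓp norm of a real matrix. -/
noncomputable def lpNorm {n m : ℕ} (p : ℝ) (A : Matrix (Fin n) (Fin m) ℝ) : ℝ :=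
  (∑ i, ∑ j, |A i j| ^ p) ^ (1 / p)

theorem weighted_average_column_bound
    (n m k : ℕ) (p : ℝ) (hp : 1 ≤ p)
    (A : Matrix (Fin n) (Fin m) ℝ) (U : Matrix (Fin n) (Fin k) ℝ)
    (V : Matrix (Fin k) (Fin m) ℝ)
    (Δ : Matrix (Fin n) (Fin m) ℝ) (hΔ : Δ = A - U * V)
    (J : Fin k → Fin m) :
    |(V.submatrix id J).det| ^ p *
        sInf {c : ℝ | ∃ (J' : Fin k → Fin m) (Y : Matrix (Fin k) (Fin m) ℝ),
          c = lpNorm p (A - A.submatrix id J' * Y) ^ p} ≤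
      ∑ d : Fin n, ∑ i : Fin m,
        |(Matrix.of (Fin.cons
            (Fin.cons (Δ d i) (fun s => Δ d (J s)))
            (fun t => Fin.cons (V t i) (fun s => V t (J s)))) :
          Matrix (Fin (k + 1)) (Fin (k + 1)) ℝ).det| ^ p := by
  have hp0 : p ≠ 0 := by linarith
  have hRHSnn : ∀ (d : Fin n) (i : Fin m), (0:ℝ) ≤
      |(Matrix.of (Fin.cons
          (Fin.cons (Δ d i) (fun s => Δ d (J s)))
          (fun t => Fin.cons (V t i) (fun s => V t (J s)))) :
        Matrix (Fin (k + 1)) (Fin (k + 1)) ℝ).det| ^ p :=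
    fun d i => Real.rpow_nonneg (abs_nonneg _) p
  set B : Matrix (Fin k) (Fin k) ℝ := V.submatrix id J with hB
  by_cases hdet : B.det = 0
  · rw [hdet, abs_zero, Real.zero_rpow hp0, zero_mul]
    exact Finset.sum_nonneg fun d _ => Finset.sum_nonneg fun i _ => hRHSnn d i
  · set X : Matrix (Fin k) (Fin m) ℝ := B⁻¹ * V with hX
    have hBunit : IsUnit B.det := isUnit_iff_ne_zero.mpr hdet
    have hBX : B * X = V := by
      rw [hX, ← Matrix.mul_assoc, Matrix.mul_nonsing_inv B hBunit, Matrix.one_mul]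
    -- the key determinant computation
    have hAJ : A - A.submatrix id J * X = Δ - Δ.submatrix id J * X := by
      subst hΔ
      have hs : (A - U * V).submatrix id J = A.submatrix id J - U * B := by
        ext t s
        simp [Matrix.submatrix_apply, Matrix.mul_apply, hB]
      rw [hs, Matrix.sub_mul, Matrix.mul_assoc, hBX]
      abel
    have hkey : ∀ (d : Fin n) (i : Fin m),
        (Matrix.of (Fin.cons
            (Fin.cons (Δ d i) (fun s => Δ d (J s)))
            (fun t => Fin.cons (V t i) (fun s => V t (J s)))) :
          Matrix (Fin (k + 1)) (Fin (k + 1)) ℝ).det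
        = (A - A.submatrix id J * X) d i * B.det := by
      intro d i
      have hu : ∀ t : Fin k, V t i = ∑ s, B t s * X s i := by
        intro t
        have := congrFun (congrFun hBX t) i
        rw [← this, Matrix.mul_apply]
      have h2 : (Matrix.of (Fin.cons (Fin.cons (Δ d i) (fun s => Δ d (J s)))
            (fun t => Fin.cons (V t i) (fun s => V t (J s)))) :
          Matrix (Fin (k + 1)) (Fin (k + 1)) ℝ) =
          Matrix.of (Fin.cons (Fin.cons (Δ d i) (fun s => Δ d (J s)))
            (fun t => Fin.cons ((fun t => V t i) t) (B t))) := rfl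
      rw [h2, det_key (Δ d i) (fun s => Δ d (J s)) (fun t => V t i) (fun s => X s i) B hu]
      congr 1
      rw [hAJ]
      simp [Matrix.sub_apply, Matrix.mul_apply, Matrix.submatrix_apply]
    -- rewrite the RHS
    have hsum : ∑ d : Fin n, ∑ i : Fin m,
        |(Matrix.of (Fin.cons
            (Fin.cons (Δ d i) (fun s => Δ d (J s)))
            (fun t => Fin.cons (V t i) (fun s => V t (J s)))) :
          Matrix (Fin (k + 1)) (Fin (k + 1)) ℝ).det| ^ p
        = |B.det| ^ p * lpNorm p (A - A.submatrix id J * X) ^ p := by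
      have hlp : lpNorm p (A - A.submatrix id J * X) ^ p
          = ∑ d : Fin n, ∑ i : Fin m, |(A - A.submatrix id J * X) d i| ^ p := by
        show ((∑ i : Fin n, ∑ j : Fin m, |(A - A.submatrix id J * X) i j| ^ p) ^ (1 / p)) ^ p = _
        rw [← Real.rpow_mul (show (0:ℝ) ≤ ∑ i : Fin n, ∑ j : Fin m,
            |(A - A.submatrix id J * X) i j| ^ p from Finset.sum_nonneg fun d _ =>
          Finset.sum_nonneg fun i _ => Real.rpow_nonneg (abs_nonneg _) p),
          one_div_mul_cancel hp0, Real.rpow_one]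
      rw [hlp, Finset.mul_sum]
      refine Finset.sum_congr rfl fun d _ => ?_
      rw [Finset.mul_sum]
      refine Finset.sum_congr rfl fun i _ => ?_
      rw [hkey d i, abs_mul, Real.mul_rpow (abs_nonneg _) (abs_nonneg _), mul_comm]
    rw [hsum]
    have hmem : lpNorm p (A - A.submatrix id J * X) ^ p ∈
        {c : ℝ | ∃ (J' : Fin k → Fin m) (Y : Matrix (Fin k) (Fin m) ℝ),
          c = lpNorm p (A - A.submatrix id J' * Y) ^ p} := ⟨J, X, rfl⟩
    have hbdd : BddBelow {c : ℝ | ∃ (J' : Fin k → Fin m) (Y : Matrix (Fin k) (Fin m) ℝ),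
        c = lpNorm p (A - A.submatrix id J' * Y) ^ p} := by
      refine ⟨0, fun c hc => ?_⟩
      obtain ⟨J', Y, rfl⟩ := hc
      exact Real.rpow_nonneg (Real.rpow_nonneg (Finset.sum_nonneg fun d _ =>
        Finset.sum_nonneg fun i _ => Real.rpow_nonneg (abs_nonneg _) p) _) p
    exact mul_le_mul_of_nonneg_left (csInf_le hbdd hmem)
      (Real.rpow_nonneg (abs_nonneg _) p)
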